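/- Under the assignment matrix produced by Probabilistic Serial, each agent receives each object that is among the commonly-agreed top j−1 objects with probability exactly 1/n, and if not all agents agree on the j-th most preferred object, any fixed agent receives her j-th most preferred object with probability at least 1/(n−1). -/

import Mathlib

/-- A doubly stochastic assignment matrix: nonnegative entries, each row and column sums to 1. -/
def DoublyStochastic (n : ℕ) (P : Fin n → Fin n → ℝ) : Prop :=
  (∀ i o, 0 ≤ P i o) ∧ (∀ i, ∑ o, P i o = 1) ∧ (∀ o, ∑ i, P i o = 1)

/-- SD-envy-freeness: `rank i o` is the position of object `o` in agent `i`'s strict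
preference (smaller = more preferred). For all agents `i, i'` and objects `o`, the mass agent
`i` gets on objects weakly preferred (by `i`) to `o` is at least the mass `i'` gets there. -/
def SDEF (n : ℕ) (rank : Fin n → Equiv.Perm (Fin n)) (P : Fin n → Fin n → ℝ) : Prop :=
  ∀ i i' o : Fin n,
    ∑ o' ∈ Finset.univ.filter (fun o' => rank i o' ≤ rank i o), P i' o' ≤
    ∑ o' ∈ Finset.univ.filter (fun o' => rank i o' ≤ rank i o), P i o'

/-- A decomposition of an assignment matrix: a probability distribution over deterministic
assignments (permutations `σ`, where `σ i` is the object of agent `i`) whose marginals are `P`. -/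
def IsDecomposition (n : ℕ) (P : Fin n → Fin n → ℝ) (w : Equiv.Perm (Fin n) → ℝ) : Prop :=
  (∀ σ, 0 ≤ w σ) ∧ (∑ σ, w σ = 1) ∧
  ∀ i o, ∑ σ ∈ Finset.univ.filter (fun σ : Equiv.Perm (Fin n) => σ i = o), w σ = P i o

/-- The probability, under the distribution `w` over deterministic assignments, that agent `i`
envies agent `i'` (i.e. strictly prefers `i'`'s object to her own). -/
def envyProb (n : ℕ) (rank : Fin n → Equiv.Perm (Fin n)) (w : Equiv.Perm (Fin n) → ℝ)
    (i i' : Fin n) : ℝ :=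
  ∑ σ ∈ Finset.univ.filter (fun σ : Equiv.Perm (Fin n) => rank i (σ i') < rank i (σ i)), w σ

/-- One run of the Probabilistic Serial (simultaneous eating) algorithm, implemented with a
step counter (\`fuel\`). State: the set \`avail\` of not-yet-exhausted objects and the remaining
fraction \`x o\` of each object. In each step every agent eats her most preferred available
object at unit speed; the step lasts until some object is exhausted; the fractions eaten are
accumulated. The matrix entry (i, o) is the total amount of object o eaten by agent i. -/
noncomputable def psAux (n : ℕ) (rank : Fin n → Equiv.Perm (Fin n)) :
    ℕ → Finset (Fin n) → (Fin n → ℝ) → Fin n → Fin n → ℝ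
  | 0, _, _ => fun _ _ => 0
  | fuel + 1, avail, x =>
    if h : avail.Nonempty then
      let fav : Fin n → Fin n := fun i =>
        (rank i).symm ((avail.image (rank i)).min' (h.image _))
      let rate : Fin n → ℕ := fun o => (Finset.univ.filter fun i => fav i = o).card
      let cands := avail.filter fun o => 0 < rate o
      if hc : cands.Nonempty then
        let T : ℝ := (cands.image fun o => x o / (rate o : ℝ)).min' (hc.image _)
        let newx : Fin n → ℝ := fun o => x o - T * (rate o : ℝ)
        fun i o => (if fav i = o then T else 0) +
          psAux n rank fuel (avail.filter fun o' => 0 < newx o') newx i o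
      else fun _ _ => 0
    else fun _ _ => 0

/-- The assignment matrix produced by Probabilistic Serial: run the eating algorithm from
full objects; at most n steps occur since each step exhausts at least one object. -/
noncomputable def psMatrix (n : ℕ) (rank : Fin n → Equiv.Perm (Fin n)) :
    Fin n → Fin n → ℝ :=
  psAux n rank n Finset.univ fun _ => 1

namespace PS

variable {n : ℕ} {rank : Fin n → Equiv.Perm (Fin n)}

noncomputable def favF (n : ℕ) (rank : Fin n → Equiv.Perm (Fin n)) (avail : Finset (Fin n))
    (h : avail.Nonempty) (i : Fin n) : Fin n :=
  (rank i).symm ((avail.image (rank i)).min' (h.image _))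

noncomputable def rateF (n : ℕ) (rank : Fin n → Equiv.Perm (Fin n)) (avail : Finset (Fin n))
    (h : avail.Nonempty) (o : Fin n) : ℕ :=
  (Finset.univ.filter fun i => favF n rank avail h i = o).card

noncomputable def candsF (n : ℕ) (rank : Fin n → Equiv.Perm (Fin n)) (avail : Finset (Fin n))
    (h : avail.Nonempty) : Finset (Fin n) :=
  avail.filter fun o => 0 < rateF n rank avail h o

noncomputable def TF (n : ℕ) (rank : Fin n → Equiv.Perm (Fin n)) (avail : Finset (Fin n))
    (h : avail.Nonempty) (x : Fin n → ℝ) (hc : (candsF n rank avail h).Nonempty) : ℝ :=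
  ((candsF n rank avail h).image fun o => x o / (rateF n rank avail h o : ℝ)).min' (hc.image _)

noncomputable def newxF (n : ℕ) (rank : Fin n → Equiv.Perm (Fin n)) (avail : Finset (Fin n))
    (h : avail.Nonempty) (x : Fin n → ℝ) (hc : (candsF n rank avail h).Nonempty)
    (o : Fin n) : ℝ :=
  x o - TF n rank avail h x hc * (rateF n rank avail h o : ℝ)

lemma psAux_succ (fuel : ℕ) (avail : Finset (Fin n)) (x : Fin n → ℝ) (h : avail.Nonempty)
    (hc : (candsF n rank avail h).Nonempty) (i o : Fin n) :
    psAux n rank (fuel + 1) avail x i o =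
      (if favF n rank avail h i = o then TF n rank avail h x hc else 0) +
        psAux n rank fuel (avail.filter fun o' => 0 < newxF n rank avail h x hc o')
          (newxF n rank avail h x hc) i o := by
  rw [psAux, dif_pos h]
  split
  · rfl
  · exact absurd hc (by assumption)

lemma psAux_empty (fuel : ℕ) (avail : Finset (Fin n)) (x : Fin n → ℝ)
    (h : ¬ avail.Nonempty) (i o : Fin n) : psAux n rank (fuel + 1) avail x i o = 0 := by
  rw [psAux, dif_neg h]

lemma psAux_cands_empty (fuel : ℕ) (avail : Finset (Fin n)) (x : Fin n → ℝ)
    (h : avail.Nonempty) (hc : ¬ (candsF n rank avail h).Nonempty) (i o : Fin n) :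
    psAux n rank (fuel + 1) avail x i o = 0 := by
  rw [psAux, dif_pos h]
  split
  · exact absurd (by assumption) hc
  · rfl

lemma favF_mem (avail : Finset (Fin n)) (h : avail.Nonempty) (i : Fin n) :
    favF n rank avail h i ∈ avail := by
  obtain ⟨a, ha, hae⟩ := Finset.mem_image.1 (Finset.min'_mem _ (h.image (rank i)))
  unfold favF
  rw [← hae, Equiv.symm_apply_apply]
  exact ha

lemma favF_eq (avail : Finset (Fin n)) (h : avail.Nonempty) (i o : Fin n) (ho : o ∈ avail)
    (hmin : ∀ o' ∈ avail, rank i o ≤ rank i o') : favF n rank avail h i = o := by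
  unfold favF
  have : (avail.image (rank i)).min' (h.image _) = rank i o := by
    apply le_antisymm
    · exact Finset.min'_le _ _ (Finset.mem_image_of_mem _ ho)
    · apply Finset.le_min'
      intro y hy
      obtain ⟨a, ha, rfl⟩ := Finset.mem_image.1 hy
      exact hmin a ha
  rw [this, Equiv.symm_apply_apply]

lemma favF_min {ostar : Fin n} (avail : Finset (Fin n)) (h : avail.Nonempty) (i : Fin n)
    (hfav : favF n rank avail h i = ostar) :
    ∀ o ∈ avail, rank i ostar ≤ rank i o := by
  intro o ho
  have h1 : rank i (favF n rank avail h i) = (avail.image (rank i)).min' (h.image _) := by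
    unfold favF; rw [Equiv.apply_symm_apply]
  rw [hfav] at h1
  rw [h1]
  exact Finset.min'_le _ _ (Finset.mem_image_of_mem _ ho)

lemma rateF_sum (avail : Finset (Fin n)) (h : avail.Nonempty) :
    ∑ o ∈ avail, rateF n rank avail h o = n := by
  have := Finset.card_eq_sum_card_fiberwise (f := favF n rank avail h) (s := Finset.univ)
    (t := avail) (fun i _ => favF_mem avail h i)
  simpa [rateF] using this.symm

lemma TF_le (avail : Finset (Fin n)) (h : avail.Nonempty) (x : Fin n → ℝ)
    (hc : (candsF n rank avail h).Nonempty) {o : Fin n} (ho : o ∈ candsF n rank avail h) :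
    TF n rank avail h x hc ≤ x o / (rateF n rank avail h o : ℝ) :=
  Finset.min'_le _ _ (Finset.mem_image_of_mem _ ho)

lemma TF_exists (avail : Finset (Fin n)) (h : avail.Nonempty) (x : Fin n → ℝ)
    (hc : (candsF n rank avail h).Nonempty) : ∃ o ∈ candsF n rank avail h,
    TF n rank avail h x hc = x o / (rateF n rank avail h o : ℝ) := by
  obtain ⟨o, ho, he⟩ := Finset.mem_image.1 (Finset.min'_mem
    ((candsF n rank avail h).image fun o => x o / (rateF n rank avail h o : ℝ)) (hc.image _))
  exact ⟨o, ho, he.symm⟩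

lemma TF_nonneg (avail : Finset (Fin n)) (h : avail.Nonempty) {x : Fin n → ℝ}
    (hx : ∀ o ∈ avail, 0 ≤ x o) (hc : (candsF n rank avail h).Nonempty) :
    0 ≤ TF n rank avail h x hc := by
  obtain ⟨o, ho, he⟩ := TF_exists avail h x hc
  have hoa : o ∈ avail := (Finset.mem_filter.1 ho).1
  rw [he]
  exact div_nonneg (hx o hoa) (Nat.cast_nonneg _)

lemma newxF_nonneg (avail : Finset (Fin n)) (h : avail.Nonempty) {x : Fin n → ℝ}
    (hx : ∀ o ∈ avail, 0 ≤ x o) (hc : (candsF n rank avail h).Nonempty) {o : Fin n}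
    (ho : o ∈ avail) : 0 ≤ newxF n rank avail h x hc o := by
  unfold newxF
  by_cases hr : 0 < rateF n rank avail h o
  · have hoc : o ∈ candsF n rank avail h := Finset.mem_filter.2 ⟨ho, hr⟩
    have h1 := TF_le avail h x hc hoc
    have hrpos : (0:ℝ) < (rateF n rank avail h o : ℝ) := by exact_mod_cast hr
    rw [le_div_iff₀ hrpos] at h1
    linarith
  · have : rateF n rank avail h o = 0 := by omega
    rw [this]
    simpa using hx o ho

lemma newxF_le (avail : Finset (Fin n)) (h : avail.Nonempty) {x : Fin n → ℝ}
    (hx : ∀ o ∈ avail, 0 ≤ x o) (hc : (candsF n rank avail h).Nonempty) (o : Fin n) :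
    newxF n rank avail h x hc o ≤ x o := by
  unfold newxF
  have h1 : 0 ≤ TF n rank avail h x hc := TF_nonneg avail h hx hc
  have h2 : (0:ℝ) ≤ (rateF n rank avail h o : ℝ) := Nat.cast_nonneg _
  nlinarith

lemma psAux_nonneg : ∀ (fuel : ℕ) (avail : Finset (Fin n)) (x : Fin n → ℝ),
    (∀ o ∈ avail, 0 ≤ x o) → ∀ i o, 0 ≤ psAux n rank fuel avail x i o := by
  intro fuel
  induction fuel with
  | zero => intro avail x hx i o; rw [psAux]
  | succ fuel ih =>
    intro avail x hx i o
    by_cases h : avail.Nonempty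
    · by_cases hc : (candsF n rank avail h).Nonempty
      · rw [psAux_succ fuel avail x h hc]
        have hT := TF_nonneg avail h hx hc
        apply add_nonneg
        · split <;> simp [hT]
        · exact ih _ _ (fun o' ho' => le_of_lt (Finset.mem_filter.1 ho').2) i o
      · rw [psAux_cands_empty fuel avail x h hc]
    · rw [psAux_empty fuel avail x h]

lemma psAux_not_mem : ∀ (fuel : ℕ) (avail : Finset (Fin n)) (x : Fin n → ℝ) {o : Fin n},
    o ∉ avail → ∀ i, psAux n rank fuel avail x i o = 0 := by
  intro fuel
  induction fuel with
  | zero => intro avail x o ho i; rw [psAux]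
  | succ fuel ih =>
    intro avail x o ho i
    by_cases h : avail.Nonempty
    · by_cases hc : (candsF n rank avail h).Nonempty
      · rw [psAux_succ fuel avail x h hc]
        rw [if_neg (fun he : favF n rank avail h i = o => ho (he ▸ favF_mem avail h i))]
        rw [ih _ _ (fun hmem => ho (Finset.mem_filter.1 hmem).1) i]
        ring
      · rw [psAux_cands_empty fuel avail x h hc]
    · rw [psAux_empty fuel avail x h]

lemma phase1 (hn : 2 ≤ n) {j : ℕ} (hj : 1 ≤ j) (hjn : j ≤ n)
    (hagree : ∀ i i' o : Fin n, (rank i o : ℕ) < j - 1 → rank i' o = rank i o)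
    (i : Fin n) :
    ∀ k, k ≤ j - 1 → ∀ o,
      psMatrix n rank i o = (if (rank i o : ℕ) < k then 1 / (n:ℝ) else 0) +
        psAux n rank (n - k) (Finset.univ.filter fun o' => k ≤ (rank i o' : ℕ))
          (fun o' => if (rank i o' : ℕ) < k then 0 else 1) i o := by
  intro k
  induction k with
  | zero =>
    intro _ o
    have h1 : (Finset.univ.filter fun o' : Fin n => 0 ≤ (rank i o' : ℕ)) = Finset.univ := by
      simp
    have h2 : (fun o' : Fin n => if (rank i o' : ℕ) < 0 then (0:ℝ) else 1) =
        fun _ => (1:ℝ) := by funext o'; simp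
    rw [h1, h2]
    simp [psMatrix]
  | succ k ih =>
    intro hk1 o
    have hk : k ≤ j - 1 := by omega
    have hkj : k < j - 1 := by omega
    have hkn : k < n := by omega
    have hnpos : (0:ℝ) < n := by positivity
    set A : Finset (Fin n) := Finset.univ.filter fun o' => k ≤ (rank i o' : ℕ) with hA
    set ok : Fin n := (rank i).symm ⟨k, hkn⟩ with hok
    have hrok : rank i ok = ⟨k, hkn⟩ := Equiv.apply_symm_apply _ _
    have f1 : ∀ i', rank i' ok = ⟨k, hkn⟩ := by
      intro i'
      rw [hagree i i' ok (by rw [hrok]; simpa using hkj), hrok]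
    have f2 : ∀ (i' : Fin n) (o' : Fin n), o' ∈ A → k ≤ (rank i' o' : ℕ) := by
      intro i' o' ho'
      have hio' : k ≤ (rank i o' : ℕ) := (Finset.mem_filter.1 ho').2
      by_contra hlt
      push_neg at hlt
      have := hagree i' i o' (by omega)
      omega
    have f3 : ok ∈ A := Finset.mem_filter.2 ⟨Finset.mem_univ _, by rw [hrok]⟩
    have h : A.Nonempty := ⟨ok, f3⟩
    have f4 : ∀ i', favF n rank A h i' = ok := by
      intro i'
      apply favF_eq A h i' ok f3
      intro o' ho'
      rw [Fin.le_def, f1 i']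
      exact f2 i' o' ho'
    have f5 : rateF n rank A h ok = n := by
      unfold rateF
      rw [Finset.filter_true_of_mem (fun i' _ => f4 i')]
      simp
    have f6 : ∀ o', o' ≠ ok → rateF n rank A h o' = 0 := by
      intro o' hne
      unfold rateF
      rw [Finset.card_eq_zero, Finset.filter_eq_empty_iff]
      intro i' _
      rw [f4 i']
      exact fun he => hne he.symm
    have f7 : candsF n rank A h = {ok} := by
      ext o'
      simp only [candsF, Finset.mem_filter, Finset.mem_singleton]
      constructor
      · rintro ⟨_, hpos⟩
        by_contra hne
        rw [f6 o' hne] at hpos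
        omega
      · rintro rfl
        exact ⟨f3, by rw [f5]; omega⟩
    have hc : (candsF n rank A h).Nonempty := by rw [f7]; exact Finset.singleton_nonempty _
    have hxok : (if (rank i ok : ℕ) < k then (0:ℝ) else 1) = 1 := by
      rw [hrok]; simp
    have hnne : (n:ℝ) ≠ 0 := by positivity
    have f8 : TF n rank A h (fun o' => if (rank i o' : ℕ) < k then (0:ℝ) else 1) hc
        = 1 / n := by
      obtain ⟨o', ho', he⟩ := TF_exists A h
        (fun o' => if (rank i o' : ℕ) < k then (0:ℝ) else 1) hc
      rw [f7, Finset.mem_singleton] at ho'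
      subst ho'
      rw [he, f5]
      simp [hrok]
    have f9 : newxF n rank A h (fun o' => if (rank i o' : ℕ) < k then (0:ℝ) else 1) hc =
        fun o' => if (rank i o' : ℕ) < k + 1 then 0 else 1 := by
      funext o'
      unfold newxF
      rw [f8]
      by_cases he : o' = ok
      · subst he
        have h1n : (1:ℝ) / n * n = 1 := by field_simp
        simp [f5, hrok, h1n, inv_mul_cancel₀ hnne]
      · have hne : (rank i o' : ℕ) ≠ k := by
          intro hval
          apply he
          have : rank i o' = ⟨k, hkn⟩ := Fin.ext hval
          rw [hok, ← this, Equiv.symm_apply_apply]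
        rw [f6 o' he]
        push_cast
        by_cases hlt : (rank i o' : ℕ) < k
        · rw [if_pos hlt, if_pos (by omega)]; ring
        · rw [if_neg hlt, if_neg (by omega)]; ring
    have f10 : (A.filter fun o' =>
          0 < (fun o'' => if (rank i o'' : ℕ) < k + 1 then (0:ℝ) else 1) o') =
        Finset.univ.filter fun o' => k + 1 ≤ (rank i o' : ℕ) := by
      ext o'
      simp only [hA, Finset.mem_filter, Finset.mem_univ, true_and]
      by_cases hlt : (rank i o' : ℕ) < k + 1
      · simp only [if_pos hlt]
        norm_num
        omega
      · simp only [if_neg hlt]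
        norm_num
        omega
    have hfuel : n - k = (n - (k + 1)) + 1 := by omega
    rw [ih hk o, hfuel, psAux_succ (n - (k+1)) A _ h hc, f4 i, f8, f9, f10]
    have hiff : ok = o ↔ (rank i o : ℕ) = k := by
      constructor
      · rintro rfl; rw [hrok]
      · intro hval
        have : rank i o = ⟨k, hkn⟩ := Fin.ext hval
        rw [hok, ← this, Equiv.symm_apply_apply]
    simp only [hiff]
    split_ifs <;> first | ring1 | (exfalso; omega)
lemma phase2 (hn : 2 ≤ n) (i i₀ ostar : Fin n) (j : ℕ)
    (hi₀ : j ≤ (rank i₀ ostar : ℕ)) :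
    ∀ (fuel : ℕ) (avail : Finset (Fin n)) (x : Fin n → ℝ),
      avail.card ≤ fuel →
      (∀ o ∈ avail, 0 < x o) → (∀ o ∈ avail, x o ≤ 1) →
      ostar ∈ avail → (∀ o ∈ avail, rank i ostar ≤ rank i o) →
      min (x ostar / ((n:ℝ) - 1)) ((∑ o ∈ avail, x o - ((n:ℝ) - j + 1) + 2) / n) ≤
        psAux n rank fuel avail x i ostar := by
  have hnR : (0:ℝ) < n := by positivity
  have h2R : (2:ℝ) ≤ n := by exact_mod_cast hn
  have hn1R : (0:ℝ) < (n:ℝ) - 1 := by linarith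
  intro fuel
  induction fuel with
  | zero =>
    intro avail x hcard _ _ hmem _
    have : avail = ∅ := Finset.card_eq_zero.1 (Nat.le_zero.1 hcard)
    rw [this] at hmem
    simp at hmem
  | succ fuel ih =>
    intro avail x hcard hpos hle1 hmem hmin
    have h : avail.Nonempty := ⟨ostar, hmem⟩
    have hx0 : ∀ o ∈ avail, 0 ≤ x o := fun o ho => (hpos o ho).le
    have hfavi : favF n rank avail h i = ostar := favF_eq avail h i ostar hmem hmin
    have hri : 0 < rateF n rank avail h ostar := by
      unfold rateF
      exact Finset.card_pos.2 ⟨i, Finset.mem_filter.2 ⟨Finset.mem_univ _, hfavi⟩⟩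
    have hoc : ostar ∈ candsF n rank avail h := Finset.mem_filter.2 ⟨hmem, hri⟩
    have hc : (candsF n rank avail h).Nonempty := ⟨ostar, hoc⟩
    rw [psAux_succ fuel avail x h hc, if_pos hfavi]
    set T := TF n rank avail h x hc with hT
    set newx : Fin n → ℝ := newxF n rank avail h x hc with hnx
    set avail' : Finset (Fin n) := avail.filter fun o' => 0 < newx o' with ha'
    have hT0 : 0 ≤ T := TF_nonneg avail h hx0 hc
    have hnewnn : ∀ o ∈ avail, 0 ≤ newx o := fun o ho => newxF_nonneg avail h hx0 hc ho
    have hnewval : ∀ o, newx o = x o - T * (rateF n rank avail h o : ℝ) := fun o => rfl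
    have hratesum : (∑ o ∈ avail, (rateF n rank avail h o : ℝ)) = n := by
      rw [← Nat.cast_sum, rateF_sum avail h]
    have hsum' : ∑ o ∈ avail', newx o = ∑ o ∈ avail, x o - T * n := by
      have e1 : ∑ o ∈ avail', newx o = ∑ o ∈ avail, newx o := by
        rw [← Finset.sum_filter_add_sum_filter_not avail (fun o' => 0 < newx o') newx]
        have hz : ∑ o ∈ avail.filter (fun o' => ¬ 0 < newx o'), newx o = 0 :=
          Finset.sum_eq_zero (fun o ho =>
            le_antisymm (not_lt.1 (Finset.mem_filter.1 ho).2)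
              (hnewnn o (Finset.mem_filter.1 ho).1))
        rw [hz, add_zero]
      have e2 : ∑ o ∈ avail, newx o = ∑ o ∈ avail, x o - T * n := by
        simp only [hnewval]
        rw [Finset.sum_sub_distrib, ← Finset.mul_sum, hratesum]
      rw [e1, e2]
    by_cases hall : ∀ i', favF n rank avail h i' = ostar
    · -- everyone eats ostar
      have hrall : rateF n rank avail h ostar = n := by
        unfold rateF
        rw [Finset.filter_true_of_mem (fun i' _ => hall i')]
        simp
      have hcands : candsF n rank avail h = {ostar} := by
        ext o
        simp only [candsF, Finset.mem_filter, Finset.mem_singleton]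
        constructor
        · rintro ⟨hoa, hpos'⟩
          obtain ⟨i', hi'⟩ := Finset.card_pos.1 hpos'
          have h1 := (Finset.mem_filter.1 hi').2
          rw [hall i'] at h1
          exact h1.symm
        · rintro rfl
          exact ⟨hmem, hri⟩
      have hTeq : T = x ostar / n := by
        obtain ⟨o', ho', he⟩ := TF_exists avail h x hc
        rw [hcands, Finset.mem_singleton] at ho'
        subst ho'
        rw [hT, he, hrall]
      have hmin₀ : ∀ o ∈ avail, rank i₀ ostar ≤ rank i₀ o := favF_min avail h i₀ (hall i₀)
      have hcardle : avail.card ≤ n - j := by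
        have himg : avail.image (rank i₀) ⊆ Finset.Ici (rank i₀ ostar) := by
          intro r hr
          obtain ⟨o, ho, rfl⟩ := Finset.mem_image.1 hr
          exact Finset.mem_Ici.2 (hmin₀ o ho)
        have h1 : avail.card = (avail.image (rank i₀)).card :=
          (Finset.card_image_of_injective _ (Equiv.injective _)).symm
        have h2 := Finset.card_le_card himg
        rw [Fin.card_Ici] at h2
        omega
      have hsum_le : ∑ o ∈ avail, x o - ((n:ℝ) - j + 1) + 2 ≤ x ostar := by
        have e3 : ∑ o ∈ avail, x o = x ostar + ∑ o ∈ avail.erase ostar, x o :=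
          (Finset.add_sum_erase avail x hmem).symm
        have e4 : ∑ o ∈ avail.erase ostar, x o ≤ ((avail.erase ostar).card : ℝ) := by
          calc ∑ o ∈ avail.erase ostar, x o ≤ ∑ _o ∈ avail.erase ostar, (1:ℝ) :=
                Finset.sum_le_sum (fun o ho => hle1 o (Finset.mem_of_mem_erase ho))
            _ = ((avail.erase ostar).card : ℝ) := by simp
        have e5 : ((avail.erase ostar).card : ℝ) ≤ (n:ℝ) - j - 1 := by
          have hc1 : (avail.erase ostar).card + j + 1 ≤ n := by
            have := Finset.card_erase_of_mem hmem
            have hcpos : 0 < avail.card := Finset.card_pos.2 h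
            omega
          have : ((avail.erase ostar).card : ℝ) + j + 1 ≤ n := by exact_mod_cast hc1
          linarith
        linarith
      have hrec : 0 ≤ psAux n rank fuel avail' newx i ostar :=
        psAux_nonneg fuel avail' newx
          (fun o ho => (Finset.mem_filter.1 ho).2.le) i ostar
      calc min (x ostar / ((n:ℝ) - 1)) ((∑ o ∈ avail, x o - ((n:ℝ) - j + 1) + 2) / n)
          ≤ (∑ o ∈ avail, x o - ((n:ℝ) - j + 1) + 2) / n := min_le_right _ _
        _ ≤ x ostar / n := by gcongr
        _ = T := hTeq.symm
        _ ≤ T + psAux n rank fuel avail' newx i ostar := le_add_of_nonneg_right hrec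
    · -- at most n-1 agents eat ostar
      push_neg at hall
      obtain ⟨i', hi'⟩ := hall
      have hrle : rateF n rank avail h ostar ≤ n - 1 := by
        have hsub : Finset.univ.filter (fun i'' => favF n rank avail h i'' = ostar) ⊆
            Finset.univ.erase i' := by
          intro a ha
          refine Finset.mem_erase.2 ⟨?_, Finset.mem_univ _⟩
          rintro rfl
          exact hi' (Finset.mem_filter.1 ha).2
        have hcle := Finset.card_le_card hsub
        rw [Finset.card_erase_of_mem (Finset.mem_univ _), Finset.card_univ,
          Fintype.card_fin] at hcle
        exact hcle
      have hrleR : (rateF n rank avail h ostar : ℝ) ≤ (n:ℝ) - 1 := by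
        have h1 : rateF n rank avail h ostar + 1 ≤ n := by omega
        have h2 : (rateF n rank avail h ostar : ℝ) + 1 ≤ n := by exact_mod_cast h1
        linarith
      have hrposR : (0:ℝ) < (rateF n rank avail h ostar : ℝ) := by exact_mod_cast hri
      have hTle : T ≤ x ostar / (rateF n rank avail h ostar : ℝ) := TF_le avail h x hc hoc
      by_cases hmem' : ostar ∈ avail'
      · -- ostar survives this step; recurse
        have hcard' : avail'.card ≤ fuel := by
          obtain ⟨om, hom, heom⟩ := TF_exists avail h x hc
          have homa : om ∈ avail := (Finset.mem_filter.1 hom).1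
          have hrom : 0 < rateF n rank avail h om := (Finset.mem_filter.1 hom).2
          have hromR : (rateF n rank avail h om : ℝ) ≠ 0 := by
            have : (0:ℝ) < (rateF n rank avail h om : ℝ) := by exact_mod_cast hrom
            linarith
          have homn : om ∉ avail' := by
            intro hcontra
            have h0 : newx om = 0 := by
              rw [hnewval om, hT, heom]
              field_simp
              ring
            have := (Finset.mem_filter.1 hcontra).2
            rw [h0] at this
            exact lt_irrefl _ this
          have hss : avail' ⊆ avail.erase om := by
            intro a ha
            exact Finset.mem_erase.2 ⟨fun he => homn (he ▸ ha),
              (Finset.mem_filter.1 (ha' ▸ ha)).1⟩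
          have hcle := Finset.card_le_card hss
          rw [Finset.card_erase_of_mem homa] at hcle
          omega
        have IH := ih avail' newx hcard'
          (fun o ho => (Finset.mem_filter.1 ho).2)
          (fun o ho => le_trans (newxF_le avail h hx0 hc o)
            (hle1 o (Finset.mem_filter.1 ho).1))
          hmem'
          (fun o ho => hmin o (Finset.mem_filter.1 ho).1)
        have keyA : x ostar / ((n:ℝ) - 1) ≤ T + newx ostar / ((n:ℝ) - 1) := by
          rw [hnewval ostar]
          rw [div_le_iff₀ hn1R]
          have hexp : (T + (x ostar - T * (rateF n rank avail h ostar : ℝ)) / ((n:ℝ) - 1)) *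
              ((n:ℝ) - 1) = T * ((n:ℝ) - 1) + (x ostar - T * (rateF n rank avail h ostar : ℝ)) := by
            field_simp
          rw [hexp]
          nlinarith [mul_le_mul_of_nonneg_left hrleR hT0]
        have keyB : (∑ o ∈ avail, x o - ((n:ℝ) - j + 1) + 2) / n =
            T + (∑ o ∈ avail', newx o - ((n:ℝ) - j + 1) + 2) / n := by
          rw [hsum']
          field_simp
          ring
        calc min (x ostar / ((n:ℝ) - 1)) ((∑ o ∈ avail, x o - ((n:ℝ) - j + 1) + 2) / n)
            ≤ min (T + newx ostar / ((n:ℝ) - 1))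
              (T + (∑ o ∈ avail', newx o - ((n:ℝ) - j + 1) + 2) / n) :=
              le_min ((min_le_left _ _).trans keyA) ((min_le_right _ _).trans_eq keyB)
          _ = T + min (newx ostar / ((n:ℝ) - 1))
              ((∑ o ∈ avail', newx o - ((n:ℝ) - j + 1) + 2) / n) := min_add_add_left T _ _
          _ ≤ T + psAux n rank fuel avail' newx i ostar := (add_le_add_iff_left T).2 IH
      · -- ostar exhausted this step
        rw [psAux_not_mem fuel avail' newx hmem' i, add_zero]
        have hnewle : newx ostar ≤ 0 := by
          by_contra hpos'
          push_neg at hpos'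
          exact hmem' (Finset.mem_filter.2 ⟨hmem, hpos'⟩)
        have h1 : x ostar ≤ T * (rateF n rank avail h ostar : ℝ) := by
          rw [hnewval ostar] at hnewle
          linarith
        have h2 : x ostar / ((n:ℝ) - 1) ≤ T := by
          rw [div_le_iff₀ hn1R]
          calc x ostar ≤ T * (rateF n rank avail h ostar : ℝ) := h1
            _ ≤ T * ((n:ℝ) - 1) := mul_le_mul_of_nonneg_left hrleR hT0
        exact le_trans (min_le_left _ _) h2

end PS

/-- suppose all agents agree on their top j−1 objects (every object of rank
< j−1 for one agent has the same rank for all agents), but no object is ranked j-th (rank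
j−1) by all agents. Then under the PS matrix each agent receives each of the commonly-agreed
top j−1 objects with probability exactly 1/n, and each agent receives her own j-th most
preferred object with probability at least 1/(n−1). -/
theorem ps_matrix_top_probabilities (n : ℕ) (hn : 2 ≤ n)
    (rank : Fin n → Equiv.Perm (Fin n)) (j : ℕ) (hj : 1 ≤ j) (hjn : j ≤ n)
    (hagree : ∀ i i' o : Fin n, (rank i o : ℕ) < j - 1 → rank i' o = rank i o)
    (hdisagree : ¬ ∃ o : Fin n, ∀ i : Fin n, (rank i o : ℕ) = j - 1) :
    (∀ i o : Fin n, (rank i o : ℕ) < j - 1 → psMatrix n rank i o = 1 / (n : ℝ)) ∧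
    (∀ i : Fin n, 1 / ((n : ℝ) - 1) ≤ psMatrix n rank i ((rank i).symm ⟨j - 1, by omega⟩)) := by
  have hnR : (0:ℝ) < n := by positivity
  have h2R : (2:ℝ) ≤ n := by exact_mod_cast hn
  have hn1R : (0:ℝ) < (n:ℝ) - 1 := by linarith
  constructor
  · intro i o ho
    have h1 := PS.phase1 hn hj hjn hagree i (j-1) le_rfl o
    rw [if_pos ho] at h1
    rw [PS.psAux_not_mem _ _ _
      (by simp only [Finset.mem_filter, Finset.mem_univ, true_and]; omega) i] at h1
    rw [h1]; ring
  · intro i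
    have hj1n : j - 1 < n := by omega
    have hostar : ∃ ostar : Fin n, ostar = (rank i).symm ⟨j - 1, hj1n⟩ := ⟨_, rfl⟩
    obtain ⟨ostar, host⟩ := hostar
    have hrost : (rank i) ostar = ⟨j - 1, hj1n⟩ := by rw [host]; exact Equiv.apply_symm_apply _ _
    push_neg at hdisagree
    obtain ⟨i₀, hi₀ne⟩ := hdisagree ostar
    have hge : j ≤ (rank i₀ ostar : ℕ) := by
      rcases Nat.lt_or_ge ((rank i₀ ostar : ℕ)) (j-1) with hl | hg
      · have heq := hagree i₀ i ostar hl
        have hv : ((rank i ostar : ℕ)) = (rank i₀ ostar : ℕ) := by rw [heq]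
        rw [hrost] at hv
        simp at hv
        omega
      · omega
    have h1 := PS.phase1 hn hj hjn hagree i (j-1) le_rfl ostar
    rw [if_neg (by rw [hrost]; simp)] at h1
    have hcard : (Finset.univ.filter fun o' => j - 1 ≤ ((rank i o' : ℕ))).card = n - (j-1) := by
      have himg : (Finset.univ.filter fun o' => j - 1 ≤ ((rank i o' : ℕ))).image (rank i) =
          Finset.Ici (⟨j-1, hj1n⟩ : Fin n) := by
        ext r
        constructor
        · intro hr
          obtain ⟨o', ho', rfl⟩ := Finset.mem_image.1 hr
          exact Finset.mem_Ici.2 (by rw [Fin.le_def]; simpa using (Finset.mem_filter.1 ho').2)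
        · intro hr
          refine Finset.mem_image.2 ⟨(rank i).symm r,
            Finset.mem_filter.2 ⟨Finset.mem_univ _, ?_⟩, Equiv.apply_symm_apply _ _⟩
          have h2 := Finset.mem_Ici.1 hr
          rw [Fin.le_def] at h2
          simpa [Equiv.apply_symm_apply] using h2
      calc (Finset.univ.filter fun o' => j - 1 ≤ ((rank i o' : ℕ))).card
          = ((Finset.univ.filter fun o' => j - 1 ≤ ((rank i o' : ℕ))).image (rank i)).card :=
            (Finset.card_image_of_injective _ (Equiv.injective _)).symm
        _ = n - (j-1) := by rw [himg, Fin.card_Ici]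
    have key := PS.phase2 hn i i₀ ostar j hge (n - (j-1))
      (Finset.univ.filter fun o' => j - 1 ≤ ((rank i o' : ℕ)))
      (fun o' => if ((rank i o' : ℕ)) < j - 1 then 0 else 1)
      (le_of_eq hcard)
      (fun o ho => by
        have h2 := (Finset.mem_filter.1 ho).2
        show (0:ℝ) < if ((rank i o : ℕ)) < j - 1 then 0 else 1
        rw [if_neg (by omega)]; norm_num)
      (fun o _ => by
        show (if ((rank i o : ℕ)) < j - 1 then (0:ℝ) else 1) ≤ 1
        split_ifs <;> norm_num)
      (Finset.mem_filter.2 ⟨Finset.mem_univ _, by rw [hrost]⟩)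
      (fun o ho => by
        rw [Fin.le_def, hrost]
        simpa using (Finset.mem_filter.1 ho).2)
    have hxo : (if ((rank i ostar : ℕ)) < j - 1 then (0:ℝ) else 1) = 1 := by rw [hrost]; simp
    have hsum : ∑ o ∈ (Finset.univ.filter fun o' => j - 1 ≤ ((rank i o' : ℕ))),
        (if ((rank i o : ℕ)) < j - 1 then (0:ℝ) else 1) = ((n:ℝ) - j + 1) := by
      rw [Finset.sum_congr rfl (fun o ho => by
        rw [if_neg (by have := (Finset.mem_filter.1 ho).2; omega)])]
      rw [Finset.sum_const, hcard]
      have hcast : ((n - (j-1) : ℕ) : ℝ) = (n:ℝ) - j + 1 := by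
        rw [Nat.cast_sub (by omega), Nat.cast_sub hj, Nat.cast_one]
        ring
      simp [hcast]
    simp only [hrost, Fin.val_mk, lt_self_iff_false, if_false] at key
    rw [hsum] at key
    have he2 : (((n:ℝ) - j + 1) - ((n:ℝ) - j + 1) + 2)/n = 2/n := by ring
    rw [he2] at key
    have hle : 1/((n:ℝ)-1) ≤ 2/n := by
      rw [div_le_div_iff₀ hn1R hnR]
      linarith
    have final : 1/((n:ℝ)-1) ≤ psMatrix n rank i ostar := by
      rw [h1, zero_add]
      calc 1/((n:ℝ)-1) = min (1/((n:ℝ)-1)) (2/n) := (min_eq_left hle).symm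
        _ ≤ _ := key
    rw [host] at final
    exact final
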